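/- If n ≡ 1 (mod 3), then for each j ∈ {1, 2}, the graph G_{n,2} − x_{nj} (the grid graph with the corner vertex x_{nj} deleted) satisfies γ_t(G_{n,2} − x_{nj}) = γ_t(G_{n,2}) − 1. -/
import Mathlib


open SimpleGraph

/-- The grid graph `G_{n,m}`, the Cartesian (box) product of paths `P_n` and `P_m`. -/
def gridGraph (n m : ℕ) : SimpleGraph (Fin n × Fin m) :=
  (pathGraph n) □ (pathGraph m)

/-- `D` is a total dominating set of `G`: every vertex has a neighbor in `D`. -/
def IsTotalDomSet {V : Type*} (G : SimpleGraph V) (D : Set V) : Prop :=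
  ∀ v : V, ∃ u ∈ D, G.Adj v u

/-- The total domination number of `G`. -/
noncomputable def totalDomNum {V : Type*} [Fintype V] (G : SimpleGraph V) : ℕ :=
  sInf {k | ∃ D : Finset V, IsTotalDomSet G ↑D ∧ D.card = k}

/-- The total bondage number: the least number of edges whose removal increases
the total domination number. -/
noncomputable def totalBondage {V : Type*} [Fintype V] (G : SimpleGraph V) : ℕ :=
  sInf {k | ∃ F : Finset (Sym2 V), ↑F ⊆ G.edgeSet ∧ F.card = k ∧
    totalDomNum (G.deleteEdges ↑F) > totalDomNum G}

noncomputable instance {V : Type*} [Fintype V] (s : Set V) : Fintype ↑s :=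
  Fintype.ofFinite _

lemma grid_adj {n : ℕ} {a b : Fin n × Fin 2} :
    (gridGraph n 2).Adj a b ↔
      (((a.1 : ℕ) + 1 = (b.1 : ℕ) ∨ (b.1 : ℕ) + 1 = (a.1 : ℕ)) ∧ (a.2 : ℕ) = (b.2 : ℕ)) ∨
      ((a.1 : ℕ) = (b.1 : ℕ) ∧ (a.2 : ℕ) ≠ (b.2 : ℕ)) := by
  have h2 := a.2.isLt; have h2' := b.2.isLt
  simp only [gridGraph, boxProd_adj, pathGraph_adj, Fin.ext_iff]
  omega

/-- Upper bound for the full grid: a total dominating set of size `2k+2`. -/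
lemma upperG {n k : ℕ} (hk : n = 3 * k + 1) :
    ∃ D : Finset (Fin n × Fin 2), IsTotalDomSet (gridGraph n 2) ↑D ∧ D.card = 2 * k + 2 := by
  classical
  have hclt : ∀ t : Fin (k + 1), (if (t : ℕ) = k then 3 * k else 3 * (t : ℕ) + 1) < n := by
    intro t; have := t.isLt; split <;> omega
  set f : Fin (k + 1) × Fin 2 → Fin n × Fin 2 :=
    fun p => (⟨if (p.1 : ℕ) = k then 3 * k else 3 * (p.1 : ℕ) + 1, hclt p.1⟩, p.2) with hf
  have hinj : Function.Injective f := by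
    intro p q hpq
    have h1 : ((f p).1 : ℕ) = ((f q).1 : ℕ) := by rw [hpq]
    have h2 : (f p).2 = (f q).2 := by rw [hpq]
    simp only [hf, Fin.val_mk] at h1 h2
    have hp := p.1.isLt; have hq := q.1.isLt
    have : p.1 = q.1 := by apply Fin.ext; split_ifs at h1 <;> omega
    exact Prod.ext this h2
  refine ⟨Finset.univ.image f, ?_, ?_⟩
  · -- membership helper
    have hmem : ∀ u : Fin n × Fin 2, ((u.1 : ℕ) % 3 = 1 ∨ (u.1 : ℕ) = 3 * k) →
        u ∈ Finset.univ.image f := by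
      intro u hu
      have hilt := u.1.isLt
      by_cases hcase : (u.1 : ℕ) = 3 * k
      · refine Finset.mem_image.2 ⟨(⟨k, by omega⟩, u.2), Finset.mem_univ _, ?_⟩
        refine Prod.ext (Fin.ext ?_) rfl
        simp only [hf, Fin.val_mk, if_true]
        omega
      · have h1 : (u.1 : ℕ) % 3 = 1 := by tauto
        refine Finset.mem_image.2 ⟨(⟨(u.1 : ℕ) / 3, by omega⟩, u.2), Finset.mem_univ _, ?_⟩
        refine Prod.ext (Fin.ext ?_) rfl
        simp only [hf, Fin.val_mk]
        split_ifs <;> omega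
    intro v
    obtain ⟨i, r⟩ := v
    have hi := i.isLt; have hr := r.isLt
    by_cases h1 : (i : ℕ) = 3 * k ∨ (i : ℕ) % 3 = 1
    · exact ⟨(i, ⟨1 - (r : ℕ), by omega⟩), hmem _ (by tauto),
        grid_adj.2 (Or.inr ⟨rfl, by simp only [Fin.val_mk]; omega⟩)⟩
    · push_neg at h1
      obtain ⟨h1a, h1b⟩ := h1
      by_cases h2 : (i : ℕ) % 3 = 0
      · exact ⟨(⟨(i : ℕ) + 1, by omega⟩, r),
          hmem _ (by simp only [Fin.val_mk]; omega),
          grid_adj.2 (Or.inl ⟨Or.inl (by simp only [Fin.val_mk]), rfl⟩)⟩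
      · have h3 : (i : ℕ) % 3 = 2 := by omega
        exact ⟨(⟨(i : ℕ) - 1, by omega⟩, r),
          hmem _ (by simp only [Fin.val_mk]; omega),
          grid_adj.2 (Or.inl ⟨Or.inr (by simp only [Fin.val_mk]; omega), rfl⟩)⟩
  · rw [Finset.card_image_of_injective _ hinj, Finset.card_univ, Fintype.card_prod,
      Fintype.card_fin, Fintype.card_fin]
    ring

/-- Lower bound for the full grid. -/
lemma lowerG {n k : ℕ} (hk : n = 3 * k + 1) (D : Finset (Fin n × Fin 2))
    (hD : IsTotalDomSet (gridGraph n 2) ↑D) : 2 * k + 2 ≤ D.card := by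
  classical
  set w : Fin n × Fin 2 → ℕ := fun u => ((u.1 : ℕ) + 1) / 3 with hw
  have hmaps : ∀ u ∈ D, w u ∈ Finset.range (k + 1) := by
    intro u _
    have := u.1.isLt
    simp only [hw, Finset.mem_range]
    omega
  rw [Finset.card_eq_sum_card_fiberwise hmaps]
  have key : ∀ t ∈ Finset.range (k + 1), 2 ≤ (D.filter fun u => w u = t).card := by
    intro t ht
    rw [Finset.mem_range] at ht
    have h3t : 3 * t < n := by omega
    obtain ⟨u0, hu0D, hu0⟩ := hD (⟨3 * t, h3t⟩, ⟨0, by omega⟩)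
    obtain ⟨u1, hu1D, hu1⟩ := hD (⟨3 * t, h3t⟩, ⟨1, by omega⟩)
    rw [grid_adj] at hu0 hu1
    simp only [Fin.val_mk] at hu0 hu1
    have h0lt := u0.1.isLt; have h0lt2 := u0.2.isLt
    have h1lt := u1.1.isLt; have h1lt2 := u1.2.isLt
    have hne : u0 ≠ u1 := by
      intro hEq
      rw [hEq] at hu0
      omega
    exact Finset.one_lt_card.2
      ⟨u0, Finset.mem_filter.2 ⟨Finset.mem_coe.1 hu0D, by simp only [hw]; omega⟩,
       u1, Finset.mem_filter.2 ⟨Finset.mem_coe.1 hu1D, by simp only [hw]; omega⟩, hne⟩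
  calc 2 * k + 2 = ∑ _t ∈ Finset.range (k + 1), 2 := by
        rw [Finset.sum_const, Finset.card_range, smul_eq_mul]; ring
    _ ≤ _ := Finset.sum_le_sum key

/-- Upper bound for the corner-deleted grid. -/
lemma upperG' {n k : ℕ} (hk : n = 3 * k + 1) (hk1 : 1 ≤ k) (j : Fin 2) (hn' : n - 1 < n) :
    ∃ D : Finset ↥{v : Fin n × Fin 2 | v ≠ ((⟨n - 1, hn'⟩ : Fin n), j)},
      IsTotalDomSet ((gridGraph n 2).induce {v | v ≠ ((⟨n - 1, hn'⟩ : Fin n), j)}) ↑D ∧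
      D.card = 2 * k + 1 := by
  classical
  have hj := j.isLt
  have hxne : ∀ (i : Fin n) (r : Fin 2), (i : ℕ) ≠ 3 * k →
      (i, r) ∈ {v : Fin n × Fin 2 | v ≠ ((⟨n - 1, hn'⟩ : Fin n), j)} := by
    intro i r hne hEq
    apply hne
    have : (i : ℕ) = ((⟨n - 1, hn'⟩ : Fin n) : ℕ) :=
      congrArg (fun p : Fin n × Fin 2 => (p.1 : ℕ)) hEq
    simp only [Fin.val_mk] at this
    omega
  have hclt : ∀ t : Fin k, 3 * (t : ℕ) + 1 < n := by intro t; have := t.isLt; omega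
  set f : Fin k × Fin 2 → ↥{v : Fin n × Fin 2 | v ≠ ((⟨n - 1, hn'⟩ : Fin n), j)} :=
    fun p => ⟨(⟨3 * (p.1 : ℕ) + 1, hclt p.1⟩, p.2),
      hxne _ _ (by simp only [Fin.val_mk]; omega)⟩ with hf
  have hinj : Function.Injective f := by
    intro p q hpq
    have h1 : ((f p).val.1 : ℕ) = ((f q).val.1 : ℕ) := by rw [hpq]
    have h2 : (f p).val.2 = (f q).val.2 := by rw [hpq]
    simp only [hf, Fin.val_mk] at h1 h2
    exact Prod.ext (Fin.ext (by omega)) h2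
  set vstar : ↥{v : Fin n × Fin 2 | v ≠ ((⟨n - 1, hn'⟩ : Fin n), j)} :=
    ⟨((⟨3 * k - 1, by omega⟩ : Fin n), (⟨1 - (j : ℕ), by omega⟩ : Fin 2)),
      hxne _ _ (by simp only [Fin.val_mk]; omega)⟩ with hv
  have hvnotmem : vstar ∉ Finset.univ.image f := by
    rw [Finset.mem_image]
    rintro ⟨p, -, hp⟩
    have h1 : ((f p).val.1 : ℕ) = ((vstar.val.1 : ℕ)) := by rw [hp]
    have hp1 := p.1.isLt
    simp only [hf, hv, Fin.val_mk] at h1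
    omega
  refine ⟨insert vstar (Finset.univ.image f), ?_, ?_⟩
  · have hmem : ∀ u : ↥{v : Fin n × Fin 2 | v ≠ ((⟨n - 1, hn'⟩ : Fin n), j)},
        (u.val.1 : ℕ) % 3 = 1 → u ∈ insert vstar (Finset.univ.image f) := by
      intro u hu
      have hilt := u.val.1.isLt
      apply Finset.mem_insert_of_mem
      refine Finset.mem_image.2 ⟨(⟨(u.val.1 : ℕ) / 3, by omega⟩, u.val.2),
        Finset.mem_univ _, ?_⟩
      apply Subtype.ext
      refine Prod.ext (Fin.ext ?_) rfl
      simp only [hf, Fin.val_mk]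
      omega
    intro v
    obtain ⟨⟨i, r⟩, hvp⟩ := v
    have hi := i.isLt; have hr := r.isLt
    by_cases hcase : (i : ℕ) = 3 * k
    · -- v = (3k, r) with r ≠ j, dominated by vstar
      have hrj : (r : ℕ) ≠ (j : ℕ) := by
        intro hEq
        apply hvp
        exact Prod.ext (Fin.ext (by simp only [Fin.val_mk]; omega)) (Fin.ext hEq)
      refine ⟨vstar, Finset.mem_insert_self _ _, ?_⟩
      rw [hv]
      show (gridGraph n 2).Adj (i, r)
        ((⟨3 * k - 1, by omega⟩ : Fin n), (⟨1 - (j : ℕ), by omega⟩ : Fin 2))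
      rw [grid_adj]; simp only [Fin.val_mk]; omega
    · by_cases h1 : (i : ℕ) % 3 = 1
      · refine ⟨⟨(i, ⟨1 - (r : ℕ), by omega⟩), hxne _ _ (by omega)⟩, hmem _ h1, ?_⟩
        exact grid_adj.2 (Or.inr ⟨rfl, show (r : ℕ) ≠ 1 - (r : ℕ) by omega⟩)
      · by_cases h2 : (i : ℕ) % 3 = 0
        · refine ⟨⟨(⟨(i : ℕ) + 1, by omega⟩, r), hxne _ _ (by simp only [Fin.val_mk]; omega)⟩,
            hmem _ (by simp only [Fin.val_mk]; omega), ?_⟩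
          exact grid_adj.2 (Or.inl ⟨Or.inl rfl, rfl⟩)
        · have h3 : (i : ℕ) % 3 = 2 := by omega
          refine ⟨⟨(⟨(i : ℕ) - 1, by omega⟩, r), hxne _ _ (by simp only [Fin.val_mk]; omega)⟩,
            hmem _ (by simp only [Fin.val_mk]; omega), ?_⟩
          exact grid_adj.2 (Or.inl ⟨Or.inr (show (i : ℕ) - 1 + 1 = (i : ℕ) by omega), rfl⟩)
  · rw [Finset.card_insert_of_notMem hvnotmem, Finset.card_image_of_injective _ hinj,
      Finset.card_univ, Fintype.card_prod, Fintype.card_fin, Fintype.card_fin]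
    ring

/-- Lower bound for the corner-deleted grid. -/
lemma lowerG' {n k : ℕ} (hk : n = 3 * k + 1) (hk1 : 1 ≤ k) (j : Fin 2) (hn' : n - 1 < n)
    (D : Finset ↥{v : Fin n × Fin 2 | v ≠ ((⟨n - 1, hn'⟩ : Fin n), j)})
    (hD : IsTotalDomSet ((gridGraph n 2).induce {v | v ≠ ((⟨n - 1, hn'⟩ : Fin n), j)}) ↑D) :
    2 * k + 1 ≤ D.card := by
  classical
  have hj := j.isLt
  set w : ↥{v : Fin n × Fin 2 | v ≠ ((⟨n - 1, hn'⟩ : Fin n), j)} → ℕ :=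
    fun u => ((u.val.1 : ℕ) + 1) / 3 with hw
  have hmaps : ∀ u ∈ D, w u ∈ Finset.range (k + 1) := by
    intro u _
    have := u.val.1.isLt
    simp only [hw, Finset.mem_range]
    omega
  rw [Finset.card_eq_sum_card_fiberwise hmaps, Finset.sum_range_succ]
  have key : ∀ t ∈ Finset.range k, 2 ≤ (D.filter fun u => w u = t).card := by
    intro t ht
    rw [Finset.mem_range] at ht
    have h3t : 3 * t < n := by omega
    have hne30 : ((⟨3 * t, h3t⟩ : Fin n), (⟨0, by omega⟩ : Fin 2))
        ∈ {v : Fin n × Fin 2 | v ≠ ((⟨n - 1, hn'⟩ : Fin n), j)} := by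
      intro hEq
      have h1 : ((⟨3 * t, h3t⟩ : Fin n) : ℕ) = ((⟨n - 1, hn'⟩ : Fin n) : ℕ) :=
        congrArg (fun p : Fin n × Fin 2 => (p.1 : ℕ)) hEq
      simp only [Fin.val_mk] at h1
      omega
    have hne31 : ((⟨3 * t, h3t⟩ : Fin n), (⟨1, by omega⟩ : Fin 2))
        ∈ {v : Fin n × Fin 2 | v ≠ ((⟨n - 1, hn'⟩ : Fin n), j)} := by
      intro hEq
      have h1 : ((⟨3 * t, h3t⟩ : Fin n) : ℕ) = ((⟨n - 1, hn'⟩ : Fin n) : ℕ) :=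
        congrArg (fun p : Fin n × Fin 2 => (p.1 : ℕ)) hEq
      simp only [Fin.val_mk] at h1
      omega
    obtain ⟨u0, hu0D, hu0'⟩ := hD ⟨(⟨3 * t, h3t⟩, ⟨0, by omega⟩), hne30⟩
    obtain ⟨u1, hu1D, hu1'⟩ := hD ⟨(⟨3 * t, h3t⟩, ⟨1, by omega⟩), hne31⟩
    have hu0 : (gridGraph n 2).Adj (⟨3 * t, h3t⟩, ⟨0, by omega⟩) u0.val := hu0'
    have hu1 : (gridGraph n 2).Adj (⟨3 * t, h3t⟩, ⟨1, by omega⟩) u1.val := hu1'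
    rw [grid_adj] at hu0 hu1
    simp only [Fin.val_mk] at hu0 hu1
    have h0lt := u0.val.1.isLt; have h0lt2 := u0.val.2.isLt
    have h1lt := u1.val.1.isLt; have h1lt2 := u1.val.2.isLt
    have hne : u0 ≠ u1 := by
      intro hEq
      rw [hEq] at hu0
      omega
    exact Finset.one_lt_card.2
      ⟨u0, Finset.mem_filter.2 ⟨Finset.mem_coe.1 hu0D, by simp only [hw]; omega⟩,
       u1, Finset.mem_filter.2 ⟨Finset.mem_coe.1 hu1D, by simp only [hw]; omega⟩, hne⟩
  have keyk : 1 ≤ (D.filter fun u => w u = k).card := by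
    have h3k : 3 * k < n := by omega
    have hne3k : ((⟨3 * k, h3k⟩ : Fin n), (⟨1 - (j : ℕ), by omega⟩ : Fin 2))
        ∈ {v : Fin n × Fin 2 | v ≠ ((⟨n - 1, hn'⟩ : Fin n), j)} := by
      intro hEq
      have h1 : ((⟨1 - (j : ℕ), by omega⟩ : Fin 2) : ℕ) = (j : ℕ) :=
        congrArg (fun p : Fin n × Fin 2 => (p.2 : ℕ)) hEq
      simp only [Fin.val_mk] at h1
      omega
    obtain ⟨u, huD, hu'⟩ := hD ⟨(⟨3 * k, h3k⟩, ⟨1 - (j : ℕ), by omega⟩), hne3k⟩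
    have hu : (gridGraph n 2).Adj (⟨3 * k, h3k⟩, ⟨1 - (j : ℕ), by omega⟩) u.val := hu'
    rw [grid_adj] at hu
    simp only [Fin.val_mk] at hu
    have hlt := u.val.1.isLt; have hlt2 := u.val.2.isLt
    have hunx := u.property
    -- u cannot be the deleted corner, so u is at column 3k-1
    have hcol : (u.val.1 : ℕ) = 3 * k - 1 := by
      rcases hu with ⟨hh, hrow⟩ | ⟨hcol, hrow⟩
      · omega
      · exfalso
        apply hunx
        refine Prod.ext (Fin.ext ?_) (Fin.ext ?_)
        · simp only [Fin.val_mk]; omega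
        · simp only [Fin.val_mk]; omega
    exact Finset.card_pos.2
      ⟨u, Finset.mem_filter.2 ⟨Finset.mem_coe.1 huD, by simp only [hw]; omega⟩⟩
  calc 2 * k + 1 = (∑ _t ∈ Finset.range k, 2) + 1 := by
        rw [Finset.sum_const, Finset.card_range, smul_eq_mul]; ring
    _ ≤ _ := Nat.add_le_add (Finset.sum_le_sum key) keyk

theorem totalDomNum_grid_two_delete_corner (n : ℕ) (hn : 2 ≤ n) (h : n % 3 = 1) (j : Fin 2) :
    totalDomNum ((gridGraph n 2).induce {v | v ≠ ((⟨n - 1, by omega⟩ : Fin n), j)}) =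
      totalDomNum (gridGraph n 2) - 1 := by
  have hk : n = 3 * (n / 3) + 1 := by omega
  set k := n / 3 with hkdef
  have hk1 : 1 ≤ k := by omega
  have hn' : n - 1 < n := by omega
  have hG : totalDomNum (gridGraph n 2) = 2 * k + 2 := by
    obtain ⟨D, hD, hcard⟩ := upperG hk
    apply le_antisymm
    · exact Nat.sInf_le ⟨D, hD, hcard⟩
    · refine le_csInf ⟨2 * k + 2, D, hD, hcard⟩ ?_
      rintro m ⟨E, hE, rfl⟩
      exact lowerG hk E hE
  have hG' : totalDomNum ((gridGraph n 2).induce {v | v ≠ ((⟨n - 1, hn'⟩ : Fin n), j)})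
      = 2 * k + 1 := by
    obtain ⟨D, hD, hcard⟩ := upperG' hk hk1 j hn'
    apply le_antisymm
    · exact Nat.sInf_le ⟨D, hD, hcard⟩
    · refine le_csInf ⟨2 * k + 1, D, hD, hcard⟩ ?_
      rintro m ⟨E, hE, rfl⟩
      exact lowerG' hk hk1 j hn' E hE
  rw [hG, hG']
  omega
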